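/- Let j : ℝ → ℝ be convex with j(0) = 0, let k > 1 and ε ∈ (0, 1/k), and set φ_ε(s) = j(ks) − k j(s) and ψ_ε(s) = |j(C_ε s)| + |j(−C_ε s)| with C_ε = 1/(ε(k−1)). Then φ_ε(s) ≥ 0 for all s, and |j(a+b) − j(a)| ≤ ε φ_ε(a) + ψ_ε(b) for all a, b ∈ ℝ. -/

import Mathlib

theorem stmt_12 (j : ℝ → ℝ) (hj : ConvexOn ℝ Set.univ j) (hj0 : j 0 = 0)
    (k ε : ℝ) (hk : 1 < k) (hε : ε ∈ Set.Ioo (0:ℝ) (1 / k))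
    (Cε : ℝ) (hCε : Cε = 1 / (ε * (k - 1)))
    (φ ψ : ℝ → ℝ)
    (hφ : ∀ s, φ s = j (k * s) - k * j s)
    (hψ : ∀ s, ψ s = |j (Cε * s)| + |j (-(Cε * s))|) :
    (∀ s : ℝ, 0 ≤ φ s) ∧
      (∀ a b : ℝ, |j (a + b) - j a| ≤ ε * φ a + ψ b) := by
  obtain ⟨hε0, hεk⟩ := hε
  have hk0 : (0:ℝ) < k := lt_trans one_pos hk
  have hεk' : ε * k < 1 := by
    rw [lt_div_iff₀ hk0] at hεk; linarith
  set l := ε * (k - 1) with hl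
  have hl0 : 0 < l := by
    have : 0 < k - 1 := by linarith
    positivity
  have hl1 : l < 1 := by
    have : l = ε * k - ε := by ring
    linarith
  have hlne : ε * (k - 1) ≠ 0 := ne_of_gt hl0
  have hClb : Cε * l = 1 := by
    rw [hCε, hl]; field_simp; exact div_self (sub_ne_zero.mpr hk.ne')
  have key : ∀ x y p q : ℝ, 0 ≤ p → 0 ≤ q → p + q = 1 →
      j (p * x + q * y) ≤ p * j x + q * j y := by
    intro x y p q hp hq hpq
    simpa using hj.2 (Set.mem_univ x) (Set.mem_univ y) hp hq hpq
  have key3 : ∀ x y z p q r : ℝ, 0 ≤ p → 0 ≤ q → 0 ≤ r → p + q + r = 1 →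
      j (p * x + q * y + r * z) ≤ p * j x + q * j y + r * j z := by
    intro x y z p q r hp hq hr hpqr
    rcases eq_or_lt_of_le hr with hr0 | hr0
    · have h := key x y p q hp hq (by linarith)
      have : r = 0 := hr0.symm
      subst this
      simpa using h
    · have hqr : 0 < q + r := by linarith
      have hqrne : q + r ≠ 0 := ne_of_gt hqr
      have h1 := key x ((q * y + r * z) / (q + r)) p (q + r) hp hqr.le (by linarith)
      have h2 := key y z (q / (q + r)) (r / (q + r)) (by positivity) (by positivity)
        (by field_simp)
      have e2 : (q / (q + r)) * y + (r / (q + r)) * z = (q * y + r * z) / (q + r) := by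
        field_simp
      rw [e2] at h2
      have h3 := mul_le_mul_of_nonneg_left h2 hqr.le
      have e3 : (q + r) * ((q / (q + r)) * j y + (r / (q + r)) * j z)
          = q * j y + r * j z := by
        field_simp
      have e1 : p * x + (q + r) * ((q * y + r * z) / (q + r)) = p * x + q * y + r * z := by
        field_simp; ring
      rw [e1] at h1
      rw [e3] at h3
      linarith
  have hφ0 : ∀ s : ℝ, 0 ≤ φ s := by
    intro s
    have h := key (k * s) 0 (1 / k) (1 - 1 / k) (by positivity)
      (by rw [sub_nonneg, div_le_one hk0]; linarith) (by ring)
    have harg : (1 / k) * (k * s) + (1 - 1 / k) * 0 = s := by field_simp; ring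
    rw [harg, hj0] at h
    rw [hφ]
    have h' := mul_le_mul_of_nonneg_left h hk0.le
    have e : k * ((1 / k) * j (k * s) + (1 - 1 / k) * 0) = j (k * s) := by
      field_simp; ring
    rw [e] at h'
    linarith
  refine ⟨hφ0, ?_⟩
  intro a b
  -- upper bound: j(a+b) - j(a) ≤ ε φ(a) + l j(Cε b)
  have hub : j (a + b) - j a ≤ ε * φ a + l * j (Cε * b) := by
    have h := key3 (k * a) a (Cε * b) ε (1 - ε * k) l hε0.le (by linarith) hl0.le
      (by rw [hl]; ring)
    have harg : ε * (k * a) + (1 - ε * k) * a + l * (Cε * b) = a + b := by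
      have hb : l * (Cε * b) = b := by
        calc l * (Cε * b) = (Cε * l) * b := by ring
          _ = b := by rw [hClb, one_mul]
      rw [hb]; ring
    rw [harg] at h
    rw [hφ]
    nlinarith [h]
  -- lower bound: j(a) - j(a+b) ≤ ε φ(a) + l j(-(Cε b))
  have hS : (0:ℝ) < 1 + k * ε := by positivity
  have hSne : (1:ℝ) + k * ε ≠ 0 := ne_of_gt hS
  have hlb : j a - j (a + b) ≤ ε * φ a + l * j (-(Cε * b)) := by
    have h := key3 (a + b) (k * a) (-(Cε * b)) (1 / (1 + k * ε)) (ε / (1 + k * ε))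
      (l / (1 + k * ε)) (by positivity) (by positivity) (by positivity)
      (by rw [hl]; field_simp; ring)
    have harg : (1 / (1 + k * ε)) * (a + b) + (ε / (1 + k * ε)) * (k * a)
        + (l / (1 + k * ε)) * (-(Cε * b)) = a := by
      rw [hCε, hl]
      have hk1 : k - 1 ≠ 0 := sub_ne_zero.mpr hk.ne'
      field_simp
      ring
    rw [harg] at h
    have h' := mul_le_mul_of_nonneg_left h hS.le
    have e : (1 + k * ε) * ((1 / (1 + k * ε)) * j (a + b) + (ε / (1 + k * ε)) * j (k * a)
        + (l / (1 + k * ε)) * j (-(Cε * b)))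
        = j (a + b) + ε * j (k * a) + l * j (-(Cε * b)) := by
      field_simp
    rw [e] at h'
    rw [hφ]
    nlinarith [h']
  rw [hψ]
  have ha1 := le_abs_self (j (Cε * b))
  have ha2 := le_abs_self (j (-(Cε * b)))
  have hb1 := abs_nonneg (j (Cε * b))
  have hb2 := abs_nonneg (j (-(Cε * b)))
  have hm1 : l * j (Cε * b) ≤ |j (Cε * b)| := by nlinarith
  have hm2 : l * j (-(Cε * b)) ≤ |j (-(Cε * b))| := by nlinarith
  rw [abs_sub_le_iff]
  constructor
  · linarith
  · linarith
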